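/- Lower bound for quasi conjunction: let P be a probability measure on a finite sample space with P(H) > 0, P(K) > 0, and set x = P(A|H), y = P(B|K), z = P(C(A|H,B|K)) = P((A∩H∩B∩K) ∪ (A∩H∩Kᶜ) ∪ (Hᶜ∩B∩K)) / P(H ∪ K). Then z ≥ max(x + y − 1, 0) (the Łukasiewicz t-norm of x and y). -/

import Mathlib

open MeasureTheory

/-- Lower bound for the probability of the quasi conjunction:
`z ≥ max (x + y - 1) 0` (Łukasiewicz t-norm). -/
theorem quasiConj_lower_bound {Ω : Type*} [Fintype Ω] [MeasurableSpace Ω]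
    [MeasurableSingletonClass Ω]
    (μ : Measure Ω) [IsProbabilityMeasure μ]
    (A H B K : Set Ω)
    (hH : 0 < (μ H).toReal) (hK : 0 < (μ K).toReal) :
    max ((μ (A ∩ H)).toReal / (μ H).toReal
          + (μ (B ∩ K)).toReal / (μ K).toReal - 1) 0
      ≤ (μ ((A ∩ H ∩ B ∩ K) ∪ (A ∩ H ∩ Kᶜ) ∪ (Hᶜ ∩ B ∩ K))).toReal
          / (μ (H ∪ K)).toReal := by
  have hm : ∀ s : Set Ω, MeasurableSet s := fun s => (Set.to_countable s).measurableSet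
  set Q : Set Ω := (A ∩ H ∩ B ∩ K) ∪ (A ∩ H ∩ Kᶜ) ∪ (Hᶜ ∩ B ∩ K) with hQ
  -- cover : H ∪ K ⊆ Q ∪ (H \ A) ∪ (K \ B)
  have hcover : H ∪ K ⊆ Q ∪ (H \ A) ∪ (K \ B) := by
    intro ω hω
    simp only [hQ, Set.mem_union, Set.mem_inter_iff, Set.mem_diff, Set.mem_compl_iff] at hω ⊢
    tauto
  have hsub : μ (H ∪ K) ≤ μ Q + μ (H \ A) + μ (K \ B) := by
    calc μ (H ∪ K) ≤ μ (Q ∪ (H \ A) ∪ (K \ B)) := measure_mono hcover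
    _ ≤ μ (Q ∪ (H \ A)) + μ (K \ B) := measure_union_le _ _
    _ ≤ μ Q + μ (H \ A) + μ (K \ B) := by
        exact add_le_add_left (measure_union_le (μ := μ) Q (H \ A)) _
  have hne : ∀ s : Set Ω, μ s ≠ ⊤ := fun s => measure_ne_top μ s
  set p := (μ (H ∪ K)).toReal
  set q := (μ Q).toReal
  set u := (μ (H \ A)).toReal
  set v := (μ (K \ B)).toReal
  set h := (μ H).toReal
  set k := (μ K).toReal
  set aH := (μ (A ∩ H)).toReal
  set bK := (μ (B ∩ K)).toReal
  have h1 : p ≤ q + u + v := by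
    have := ENNReal.toReal_mono (by simp [hne]) hsub
    rwa [ENNReal.toReal_add (by simp [hne]) (hne _), ENNReal.toReal_add (hne _) (hne _)] at this
  have h2 : aH + u = h := by
    have := measure_inter_add_diff (μ := μ) H (hm A)
    rw [Set.inter_comm] at this
    have := congrArg ENNReal.toReal this
    rwa [ENNReal.toReal_add (hne _) (hne _)] at this
  have h3 : bK + v = k := by
    have := measure_inter_add_diff (μ := μ) K (hm B)
    rw [Set.inter_comm] at this
    have := congrArg ENNReal.toReal this
    rwa [ENNReal.toReal_add (hne _) (hne _)] at this
  have h4 : h ≤ p := ENNReal.toReal_mono (hne _) (measure_mono Set.subset_union_left)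
  have h5 : k ≤ p := ENNReal.toReal_mono (hne _) (measure_mono Set.subset_union_right)
  have h6 : aH ≤ h := ENNReal.toReal_mono (hne _) (measure_mono Set.inter_subset_right)
  have h7 : bK ≤ k := ENNReal.toReal_mono (hne _) (measure_mono Set.inter_subset_right)
  have hq : 0 ≤ q := ENNReal.toReal_nonneg
  have hu : 0 ≤ u := ENNReal.toReal_nonneg
  have hv : 0 ≤ v := ENNReal.toReal_nonneg
  have haH : 0 ≤ aH := ENNReal.toReal_nonneg
  have hbK : 0 ≤ bK := ENNReal.toReal_nonneg
  have hp : 0 < p := lt_of_lt_of_le hH h4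
  rw [max_le_iff]
  constructor
  · rw [sub_le_iff_le_add, div_add_div _ _ (ne_of_gt hH) (ne_of_gt hK),
      div_le_iff₀ (by positivity), add_mul, div_mul_eq_mul_div,
      ← sub_le_iff_le_add, le_div_iff₀ hp]
    nlinarith [mul_nonneg (sub_nonneg.2 h4) (sub_nonneg.2 h6),
      mul_nonneg (sub_nonneg.2 h5) (sub_nonneg.2 h7),
      mul_nonneg hu (le_of_lt hK), mul_nonneg hv (le_of_lt hH),
      mul_pos hH hK, mul_nonneg (mul_nonneg hq hH.le) hK.le]
  · positivity
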